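/- Let τ : ℂ[x, y₁₃, y₁₄, y₁₅, y₁₆] → ℂ[x, w₃, w₂, ŵ₂] be the ℂ-algebra homomorphism with x ↦ x, y₁₃ ↦ w₃w₂²ŵ₂³, y₁₄ ↦ w₃²w₂⁴, y₁₅ ↦ w₃³ŵ₂³, y₁₆ ↦ w₃⁴w₂². Then τ(f₁₂,ₐ) lies in the ideal of ℂ[x, w₃, w₂, ŵ₂] generated by w₃⁶ − k₃(x), w₂⁶ − k₂(x) and ŵ₂⁶ − k̂₂(x), for every a = 1, …, 9; consequently τ induces a ring homomorphism R₁₂ = ℂ[x,y₁₃,y₁₄,y₁₅,y₁₆]/𝒫 → R̂₁₂ = ℂ[x, w₃, w₂, ŵ₂]/(w₃⁶ − k₃(x), w₂⁶ − k₂(x), ŵ₂⁶ − k̂₂(x)). -/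
import Mathlib


open MvPolynomial

/-- `k₃(x)` in `ℂ[x,y₁₃,y₁₄,y₁₅,y₁₆]` (variables `X 0 = x`, `X 1 = y₁₃`, `X 2 = y₁₄`,
`X 3 = y₁₅`, `X 4 = y₁₆`). -/
noncomputable def k3X12 (b : Fin 7 → ℂ) : MvPolynomial (Fin 5) ℂ :=
  (X 0 - C (b 0)) * (X 0 - C (b 1)) * (X 0 - C (b 2))

/-- `k₂(x)` in `ℂ[x,y₁₃,y₁₄,y₁₅,y₁₆]`. -/
noncomputable def k2X12 (b : Fin 7 → ℂ) : MvPolynomial (Fin 5) ℂ :=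
  (X 0 - C (b 3)) * (X 0 - C (b 4))

/-- `k̂₂(x)` in `ℂ[x,y₁₃,y₁₄,y₁₅,y₁₆]`. -/
noncomputable def hk2X12 (b : Fin 7 → ℂ) : MvPolynomial (Fin 5) ℂ :=
  (X 0 - C (b 5)) * (X 0 - C (b 6))

/-- The nine defining polynomials `f₁₂,₁, …, f₁₂,₉` of the `(6,13,14,15,16)` curve. -/
noncomputable def fX12 (b : Fin 7 → ℂ) : Fin 9 → MvPolynomial (Fin 5) ℂ :=
  ![(X 1) ^ 2 - hk2X12 b * X 2,
    X 1 * X 2 - k2X12 b * X 3,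
    hk2X12 b * (X 2) ^ 2 - k2X12 b * (X 1 * X 3),
    (X 2) ^ 2 - k2X12 b * X 4,
    X 1 * X 4 - X 2 * X 3,
    (X 3) ^ 2 - hk2X12 b * k3X12 b,
    X 2 * X 4 - k2X12 b * k3X12 b,
    X 3 * X 4 - k3X12 b * X 1,
    (X 4) ^ 2 - k3X12 b * X 2]

/-- The ideal `𝒫 = (f₁₂,₁, …, f₁₂,₉)`. -/
noncomputable def PX12 (b : Fin 7 → ℂ) : Ideal (MvPolynomial (Fin 5) ℂ) :=
  Ideal.span (Set.range (fX12 b))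

/-- `k₃(x)` in `ℂ[x,w₃,w₂,ŵ₂]` (variables `X 0 = x`, `X 1 = w₃`, `X 2 = w₂`, `X 3 = ŵ₂`). -/
noncomputable def k3W (b : Fin 7 → ℂ) : MvPolynomial (Fin 4) ℂ :=
  (X 0 - C (b 0)) * (X 0 - C (b 1)) * (X 0 - C (b 2))

/-- `k₂(x)` in `ℂ[x,w₃,w₂,ŵ₂]`. -/
noncomputable def k2W (b : Fin 7 → ℂ) : MvPolynomial (Fin 4) ℂ :=
  (X 0 - C (b 3)) * (X 0 - C (b 4))

/-- `k̂₂(x)` in `ℂ[x,w₃,w₂,ŵ₂]`. -/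
noncomputable def hk2W (b : Fin 7 → ℂ) : MvPolynomial (Fin 4) ℂ :=
  (X 0 - C (b 5)) * (X 0 - C (b 6))

/-- The ideal `(w₃⁶ − k₃(x), w₂⁶ − k₂(x), ŵ₂⁶ − k̂₂(x))` of `ℂ[x,w₃,w₂,ŵ₂]`. -/
noncomputable def JW12 (b : Fin 7 → ℂ) : Ideal (MvPolynomial (Fin 4) ℂ) :=
  Ideal.span {(X 1) ^ 6 - k3W b, (X 2) ^ 6 - k2W b, (X 3) ^ 6 - hk2W b}

/-- `τ : ℂ[x,y₁₃,y₁₄,y₁₅,y₁₆] → ℂ[x,w₃,w₂,ŵ₂]`, `x ↦ x`, `y₁₃ ↦ w₃w₂²ŵ₂³`,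
`y₁₄ ↦ w₃²w₂⁴`, `y₁₅ ↦ w₃³ŵ₂³`, `y₁₆ ↦ w₃⁴w₂²`. -/
noncomputable def tauX12 : MvPolynomial (Fin 5) ℂ →ₐ[ℂ] MvPolynomial (Fin 4) ℂ :=
  MvPolynomial.aeval ![X 0,
    X 1 * (X 2) ^ 2 * (X 3) ^ 3,
    (X 1) ^ 2 * (X 2) ^ 4,
    (X 1) ^ 3 * (X 3) ^ 3,
    (X 1) ^ 4 * (X 2) ^ 2]

set_option maxHeartbeats 1000000

private lemma tau_f0 (b : Fin 7 → ℂ) : tauX12 (fX12 b 0) =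
    (X 1) ^ 2 * (X 2) ^ 4 * ((X 3) ^ 6 - hk2W b) := by
  show tauX12 ((X 1) ^ 2 - hk2X12 b * X 2) = _
  simp [tauX12, hk2X12, hk2W]; ring

private lemma tau_f1 (b : Fin 7 → ℂ) : tauX12 (fX12 b 1) =
    (X 1) ^ 3 * (X 3) ^ 3 * ((X 2) ^ 6 - k2W b) := by
  show tauX12 (X 1 * X 2 - k2X12 b * X 3) = _
  simp [tauX12, k2X12, k2W]; ring

private lemma tau_f2 (b : Fin 7 → ℂ) : tauX12 (fX12 b 2) =
    (X 1) ^ 4 * (X 2) ^ 2 * hk2W b * ((X 2) ^ 6 - k2W b)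
    - (X 1) ^ 4 * (X 2) ^ 2 * k2W b * ((X 3) ^ 6 - hk2W b) := by
  show tauX12 (hk2X12 b * (X 2) ^ 2 - k2X12 b * (X 1 * X 3)) = _
  simp [tauX12, k2X12, hk2X12, k2W, hk2W]; ring

private lemma tau_f3 (b : Fin 7 → ℂ) : tauX12 (fX12 b 3) =
    (X 1) ^ 4 * (X 2) ^ 2 * ((X 2) ^ 6 - k2W b) := by
  show tauX12 ((X 2) ^ 2 - k2X12 b * X 4) = _
  simp [tauX12, k2X12, k2W]; ring

private lemma tau_f4 (b : Fin 7 → ℂ) : tauX12 (fX12 b 4) = 0 := by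
  show tauX12 (X 1 * X 4 - X 2 * X 3) = _
  simp [tauX12]; ring

private lemma tau_f5 (b : Fin 7 → ℂ) : tauX12 (fX12 b 5) =
    (X 3) ^ 6 * ((X 1) ^ 6 - k3W b) + k3W b * ((X 3) ^ 6 - hk2W b) := by
  show tauX12 ((X 3) ^ 2 - hk2X12 b * k3X12 b) = _
  simp [tauX12, k3X12, hk2X12, k3W, hk2W]; ring

private lemma tau_f6 (b : Fin 7 → ℂ) : tauX12 (fX12 b 6) =
    (X 2) ^ 6 * ((X 1) ^ 6 - k3W b) + k3W b * ((X 2) ^ 6 - k2W b) := by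
  show tauX12 (X 2 * X 4 - k2X12 b * k3X12 b) = _
  simp [tauX12, k3X12, k2X12, k3W, k2W]; ring

private lemma tau_f7 (b : Fin 7 → ℂ) : tauX12 (fX12 b 7) =
    X 1 * (X 2) ^ 2 * (X 3) ^ 3 * ((X 1) ^ 6 - k3W b) := by
  show tauX12 (X 3 * X 4 - k3X12 b * X 1) = _
  simp [tauX12, k3X12, k3W]; ring

private lemma tau_f8 (b : Fin 7 → ℂ) : tauX12 (fX12 b 8) =
    (X 1) ^ 2 * (X 2) ^ 4 * ((X 1) ^ 6 - k3W b) := by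
  show tauX12 ((X 4) ^ 2 - k3X12 b * X 2) = _
  simp [tauX12, k3X12, k3W]; ring

private lemma key_mem (b : Fin 7 → ℂ) : ∀ a : Fin 9, tauX12 (fX12 b a) ∈ JW12 b := by
  have hA : (X 1 : MvPolynomial (Fin 4) ℂ) ^ 6 - k3W b ∈ JW12 b :=
    Ideal.subset_span (by simp)
  have hB : (X 2 : MvPolynomial (Fin 4) ℂ) ^ 6 - k2W b ∈ JW12 b :=
    Ideal.subset_span (by simp)
  have hC : (X 3 : MvPolynomial (Fin 4) ℂ) ^ 6 - hk2W b ∈ JW12 b :=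
    Ideal.subset_span (by simp)
  intro a
  fin_cases a
  · exact (tau_f0 b) ▸ Ideal.mul_mem_left _ _ hC
  · exact (tau_f1 b) ▸ Ideal.mul_mem_left _ _ hB
  · exact (tau_f2 b) ▸ Ideal.sub_mem _ (Ideal.mul_mem_left _ _ hB) (Ideal.mul_mem_left _ _ hC)
  · exact (tau_f3 b) ▸ Ideal.mul_mem_left _ _ hB
  · exact (tau_f4 b) ▸ Ideal.zero_mem _
  · exact (tau_f5 b) ▸ Ideal.add_mem _ (Ideal.mul_mem_left _ _ hA) (Ideal.mul_mem_left _ _ hC)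
  · exact (tau_f6 b) ▸ Ideal.add_mem _ (Ideal.mul_mem_left _ _ hA) (Ideal.mul_mem_left _ _ hB)
  · exact (tau_f7 b) ▸ Ideal.mul_mem_left _ _ hA
  · exact (tau_f8 b) ▸ Ideal.mul_mem_left _ _ hA

/-- `τ(f₁₂,ₐ)` lies in `(w₃⁶ − k₃(x), w₂⁶ − k₂(x), ŵ₂⁶ − k̂₂(x))` for every `a`; consequently
`τ` induces a ring homomorphism `R₁₂ = ℂ[x,y₁₃,y₁₄,y₁₅,y₁₆]/𝒫 → R̂₁₂`. -/
theorem tau_maps_X12_relations (b : Fin 7 → ℂ) :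
    (∀ a : Fin 9, tauX12 (fX12 b a) ∈ JW12 b) ∧
    ∃ g : (MvPolynomial (Fin 5) ℂ ⧸ PX12 b) →+* (MvPolynomial (Fin 4) ℂ ⧸ JW12 b),
      ∀ f : MvPolynomial (Fin 5) ℂ,
        g (Ideal.Quotient.mk (PX12 b) f) = Ideal.Quotient.mk (JW12 b) (tauX12 f) := by
  refine ⟨key_mem b, ?_⟩
  have hker : PX12 b ≤ RingHom.ker
      ((Ideal.Quotient.mk (JW12 b)).comp tauX12.toRingHom) := by
    rw [PX12, Ideal.span_le]
    rintro _ ⟨a, rfl⟩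
    simp only [SetLike.mem_coe, RingHom.mem_ker, RingHom.comp_apply,
      AlgHom.toRingHom_eq_coe, RingHom.coe_coe, Ideal.Quotient.eq_zero_iff_mem]
    exact key_mem b a
  refine ⟨Ideal.Quotient.lift (PX12 b) _ hker, fun f => ?_⟩
  exact Ideal.Quotient.lift_mk (PX12 b) _ hker
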